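/- Let μ be a probability measure and (Φ_t)_{t≥0} a family of Young functions, each a continuous increasing bijection of [0,∞), such that for every x > 0 the map t ↦ Φ_t(x) tends to +∞ as t → ∞ when x > x₀ and Φ_t(x₀) = 1 for all t, and Φ_t ≤ Φ_s on (0,x₀) for t ≥ s. Then for any bounded measurable f, lim_{t→∞} ‖f‖_{Φ_t} = ‖f‖_∞ / x₀. -/

import Mathlib

open MeasureTheory Set Filter

noncomputable def luxNorm {α : Type*} [MeasurableSpace α] (μ : Measure α)
    (Φ : ℝ → ℝ) (f : α → ℝ) : ℝ :=
  sInf {l : ℝ | 0 < l ∧ ∫ x, Φ (|f x| / l) ∂μ ≤ 1}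

/-- As t → ∞ the Luxembourg norms ‖f‖_{Φ_t} converge to ‖f‖_∞ / x₀. -/
theorem luxNorm_tendsto_sup_norm {α : Type*} [MeasurableSpace α] (μ : Measure α)
    [IsProbabilityMeasure μ]
    (Φ : ℝ → ℝ → ℝ) (x₀ : ℝ) (hx₀ : 0 < x₀)
    (hYoung : ∀ t, 0 ≤ t → ConvexOn ℝ (Ici 0) (Φ t) ∧ Φ t 0 = 0 ∧
      StrictMonoOn (Φ t) (Ici 0) ∧ Continuous (Φ t))
    (hone : ∀ t, 0 ≤ t → Φ t x₀ = 1)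
    (hblow : ∀ x, x₀ < x → Tendsto (fun t => Φ t x) atTop atTop)
    (hmono : ∀ s t, 0 ≤ s → s ≤ t → ∀ x, 0 < x → x < x₀ → Φ t x ≤ Φ s x)
    (f : α → ℝ) (hmeas : Measurable f) (M : ℝ) (hM : 0 < M)
    (hbound : ∀ x, |f x| ≤ M)
    (hpos : ∀ ε : ℝ, 0 < ε → ε < 1 → 0 < μ {x | (1 - ε) * M ≤ |f x|}) :
    Tendsto (fun t => luxNorm μ (Φ t) f) atTop (nhds (M / x₀)) := by
  set L := M / x₀ with hLdef
  have hL : 0 < L := div_pos hM hx₀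
  have hmonoΦ : ∀ t, 0 ≤ t → MonotoneOn (Φ t) (Ici 0) :=
    fun t ht => ((hYoung t ht).2.2.1).monotoneOn
  have hzero : ∀ t, 0 ≤ t → Φ t 0 = 0 := fun t ht => (hYoung t ht).2.1
  have hnn : ∀ t, 0 ≤ t → ∀ x, 0 ≤ x → 0 ≤ Φ t x := by
    intro t ht x hx
    have := hmonoΦ t ht (mem_Ici.2 le_rfl) (mem_Ici.2 hx) hx
    rwa [hzero t ht] at this
  have habs : ∀ (x : α) (l : ℝ), 0 < l → 0 ≤ |f x| / l :=
    fun x l hl => div_nonneg (abs_nonneg _) hl.le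
  have hint : ∀ t, 0 ≤ t → ∀ l, 0 < l → Integrable (fun x => Φ t (|f x| / l)) μ := by
    intro t ht l hl
    refine Integrable.mono' (integrable_const (Φ t (M / l))) ?_ ?_
    · exact ((hYoung t ht).2.2.2.measurable.comp (hmeas.abs.div_const l)).aestronglyMeasurable
    · filter_upwards with x
      rw [Real.norm_eq_abs, abs_of_nonneg (hnn t ht _ (habs x l hl))]
      exact hmonoΦ t ht (mem_Ici.2 (habs x l hl)) (mem_Ici.2 (div_nonneg hM.le hl.le))
        (by gcongr; exact hbound x)
  have hBdd : ∀ t, BddBelow {l : ℝ | 0 < l ∧ ∫ x, Φ t (|f x| / l) ∂μ ≤ 1} :=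
    fun t => ⟨0, fun m hm => hm.1.le⟩
  have memL : ∀ t, 0 ≤ t → L ∈ {l : ℝ | 0 < l ∧ ∫ x, Φ t (|f x| / l) ∂μ ≤ 1} := by
    intro t ht
    refine ⟨hL, ?_⟩
    have hle : ∀ x, Φ t (|f x| / L) ≤ 1 := by
      intro x
      rw [← hone t ht]
      refine hmonoΦ t ht (mem_Ici.2 (habs x L hL)) (mem_Ici.2 hx₀.le) ?_
      rw [div_le_iff₀ hL]
      calc |f x| ≤ M := hbound x
        _ = x₀ * L := by rw [hLdef]; field_simp
    calc ∫ x, Φ t (|f x| / L) ∂μ ≤ ∫ _, (1:ℝ) ∂μ :=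
          integral_mono (hint t ht L hL) (integrable_const 1) hle
      _ = 1 := by simp
  have hupper : ∀ t, 0 ≤ t → luxNorm μ (Φ t) f ≤ L :=
    fun t ht => csInf_le (hBdd t) (memL t ht)
  rw [tendsto_order]
  constructor
  · intro a ha
    set l : ℝ := (L + max a 0) / 2 with hldef
    have hl0 : 0 < l := by positivity
    have hlL : l < L := by
      have : max a 0 < L := max_lt ha hL
      simp only [hldef]; linarith
    have hal : a < l := by
      have : a ≤ max a 0 := le_max_left a 0
      simp only [hldef]; linarith
    have hx₀l : x₀ * l < M := by
      have := (mul_lt_mul_iff_right₀ hx₀).2 hlL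
      rwa [hLdef, mul_div_cancel₀ M hx₀.ne'] at this
    set ε : ℝ := min (1/2) ((M - x₀ * l) / (2 * M)) with hεdef
    have hε0 : 0 < ε := lt_min (by norm_num) (div_pos (by linarith) (by linarith))
    have hε1 : ε < 1 := lt_of_le_of_lt (min_le_left _ _) (by norm_num)
    set y : ℝ := (1 - ε) * M / l with hydef
    have hεM : ε * M ≤ (M - x₀ * l) / 2 := by
      have h1 : ε ≤ (M - x₀ * l) / (2 * M) := min_le_right _ _
      have := mul_le_mul_of_nonneg_right h1 hM.le
      calc ε * M ≤ (M - x₀ * l) / (2 * M) * M := this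
        _ = (M - x₀ * l) / 2 := by field_simp
    have hy : x₀ < y := by
      rw [hydef, lt_div_iff₀ hl0]
      nlinarith
    have hy0 : 0 ≤ y := le_trans hx₀.le hy.le
    set A : Set α := {x | (1 - ε) * M ≤ |f x|} with hAdef
    have hA : MeasurableSet A := measurableSet_le measurable_const hmeas.abs
    have hc : 0 < (μ A).toReal :=
      ENNReal.toReal_pos (hpos ε hε0 hε1).ne' (measure_ne_top μ A)
    filter_upwards [eventually_ge_atTop (0:ℝ),
      (hblow y hy).eventually_gt_atTop (1 / (μ A).toReal)] with t ht hΦ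
    refine lt_of_lt_of_le hal (le_csInf ⟨L, memL t ht⟩ ?_)
    rintro m ⟨hm, hintle⟩
    by_contra hml
    push_neg at hml
    have h1 : ∀ x ∈ A, Φ t y ≤ Φ t (|f x| / m) := by
      intro x hx
      refine hmonoΦ t ht (mem_Ici.2 hy0) (mem_Ici.2 (habs x m hm)) ?_
      rw [hydef]
      exact div_le_div₀ (abs_nonneg _) hx hm hml.le
    have h2 : Φ t y * (μ A).toReal ≤ ∫ x in A, Φ t (|f x| / m) ∂μ :=
      setIntegral_ge_of_const_le_real hA (measure_ne_top μ A) h1 ((hint t ht m hm).integrableOn)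
    have h3 : ∫ x in A, Φ t (|f x| / m) ∂μ ≤ ∫ x, Φ t (|f x| / m) ∂μ :=
      setIntegral_le_integral (hint t ht m hm)
        (Filter.Eventually.of_forall fun x => hnn t ht _ (habs x m hm))
    have h4 : 1 < Φ t y * (μ A).toReal := (div_lt_iff₀ hc).1 hΦ
    linarith
  · intro a ha
    filter_upwards [eventually_ge_atTop (0:ℝ)] with t ht
    exact lt_of_le_of_lt (hupper t ht) ha
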